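/- Let m ≥ 1 be an integer and δ₀ > -m. Define v(δ₀,m) = ∑_{k=m}^∞ m·p_k(δ₀)/((k+δ₀)(2m+δ₀)) - m/(2m+δ₀)², where p_k(δ₀) is the limiting degree distribution. Then v(δ₀,m) > 0. -/

import Mathlib

/-- Limiting degree distribution of the affine preferential attachment model. -/
noncomputable def pdeg (m : ℕ) (δ : ℝ) (k : ℕ) : ℝ :=
  (2 + δ / m) * (Real.Gamma (k + δ) * Real.Gamma (m + 2 + δ + δ / m)) /
    (Real.Gamma (m + δ) * Real.Gamma (k + 3 + δ + δ / m))

/-- A positive sequence whose successive differences equal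
`c * f (j+1) / (j + b)` with `c, b > 0` tends to `0`, and the telescoping
series sums to `f 0`. -/
lemma telescope_hasSum (f : ℕ → ℝ) (c b : ℝ) (hc : 0 < c) (hb : 0 < b)
    (hpos : ∀ j, 0 < f j)
    (heq : ∀ j, f j - f (j + 1) = c * f (j + 1) / (j + b)) :
    HasSum (fun j => f j - f (j + 1)) (f 0) := by
  have hjb : ∀ j : ℕ, (0:ℝ) < (j:ℝ) + b := fun j => by positivity
  have hg0 : ∀ j, 0 ≤ f j - f (j + 1) := by
    intro j
    rw [heq j]
    exact div_nonneg (mul_nonneg hc.le (hpos _).le) (hjb j).le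
  have hmono : ∀ j, f (j + 1) ≤ f j := fun j => by linarith [hg0 j]
  have hanti : Antitone f := antitone_nat_of_succ_le hmono
  have hbdd : BddBelow (Set.range f) := ⟨0, by rintro x ⟨j, rfl⟩; exact (hpos j).le⟩
  set L := ⨅ j, f j with hLdef
  have htend : Filter.Tendsto f Filter.atTop (nhds L) := tendsto_atTop_ciInf hanti hbdd
  have hL0 : 0 ≤ L := le_ciInf fun j => (hpos j).le
  have hLle : ∀ j, L ≤ f j := fun j => ciInf_le hbdd j
  have hsum : Summable (fun j => f j - f (j + 1)) := by
    apply summable_of_sum_range_le hg0 (c := f 0)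
    intro n
    rw [Finset.sum_range_sub' f n]
    linarith [hpos n]
  have hLz : L = 0 := by
    by_contra hne
    have hLpos : 0 < L := lt_of_le_of_ne hL0 (Ne.symm hne)
    set K := max b 1 with hK
    have hK1 : 1 ≤ K := le_max_right _ _
    have hKpos : 0 < K := lt_of_lt_of_le one_pos hK1
    have hcomp : ∀ j : ℕ, c * L / K * (1 / ((j:ℝ) + 1)) ≤ f j - f (j + 1) := by
      intro j
      rw [heq j]
      have hbK : b ≤ K := le_max_left _ _
      have h1 : (j:ℝ) + b ≤ ((j:ℝ) + 1) * K := by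
        nlinarith [Nat.cast_nonneg (α := ℝ) j]
      rw [div_mul_eq_mul_div, mul_one_div, div_div]
      exact div_le_div₀ (mul_nonneg hc.le (hpos _).le)
        (mul_le_mul_of_nonneg_left (hLle (j + 1)) hc.le) (hjb j) h1
    have hs1 : Summable (fun j : ℕ => c * L / K * (1 / ((j:ℝ) + 1))) :=
      Summable.of_nonneg_of_le (fun j => by positivity) hcomp hsum
    have hs2 : Summable (fun j : ℕ => 1 / ((j:ℝ) + 1)) := by
      have h := hs1.mul_left (K / (c * L))
      convert h using 2 with j
      · rfl
      field_simp [hKpos.ne', hc.ne', hLpos.ne']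
    have hs3 : Summable (fun n : ℕ => 1 / (n:ℝ)) := by
      rw [← summable_nat_add_iff 1]
      convert hs2 using 2 with j
      · rfl
      push_cast
      ring
    exact Real.not_summable_one_div_natCast hs3
  have htend2 : Filter.Tendsto (fun n => ∑ i ∈ Finset.range n, (f i - f (i + 1)))
      Filter.atTop (nhds (f 0)) := by
    have heq2 : (fun n => ∑ i ∈ Finset.range n, (f i - f (i + 1)))
        = fun n => f 0 - f n := by
      funext n; exact Finset.sum_range_sub' f n
    rw [heq2]
    have h := (tendsto_const_nhds (x := f 0)).sub htend
    rwa [hLz, sub_zero] at h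
  have h := hsum.hasSum.tendsto_sum_nat
  have heqsum : ∑' j, (f j - f (j + 1)) = f 0 := tendsto_nhds_unique h htend2
  rw [← heqsum]
  exact hsum.hasSum

/-- Convexity bound: for positive `x`, `2/a - x/a² ≤ 1/x`. -/
lemma aux_inv {a x : ℝ} (ha : 0 < a) (hx : 0 < x) : 2 / a - x / a ^ 2 ≤ 1 / x := by
  have key : 1 / x - (2 / a - x / a ^ 2) = (a - x) ^ 2 / (a ^ 2 * x) := by
    field_simp
    ring
  nlinarith [div_nonneg (sq_nonneg (a - x)) (by positivity : (0:ℝ) ≤ a ^ 2 * x)]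

/-- Strict version when `x ≠ a`. -/
lemma aux_inv_strict {a x : ℝ} (ha : 0 < a) (hx : 0 < x) (hne : x ≠ a) :
    2 / a - x / a ^ 2 < 1 / x := by
  have key : 1 / x - (2 / a - x / a ^ 2) = (a - x) ^ 2 / (a ^ 2 * x) := by
    field_simp
    ring
  have h1 : 0 < (a - x) ^ 2 := by
    have h2 : a - x ≠ 0 := fun h => hne (by linarith)
    positivity
  nlinarith [div_pos h1 (by positivity : (0:ℝ) < a ^ 2 * x)]

set_option maxHeartbeats 1000000 in
theorem stmt_9 (m : ℕ) (hm : 1 ≤ m) (δ₀ : ℝ) (hδ : -(m : ℝ) < δ₀) :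
    0 < (∑' j : ℕ, (m : ℝ) * pdeg m δ₀ (m + j) /
          ((((m + j : ℕ) : ℝ) + δ₀) * (2 * m + δ₀)))
        - m / (2 * m + δ₀) ^ 2 := by
  have hm0 : (0:ℝ) < m := by exact_mod_cast hm
  have hmne : ((m:ℕ):ℝ) ≠ 0 := hm0.ne'
  have hmδ : 0 < (m:ℝ) + δ₀ := by linarith
  set d : ℝ := δ₀ / m with hdd
  have hd : -1 < d := by
    rw [hdd, lt_div_iff₀ hm0]
    linarith
  have h1d : 0 < 1 + d := by linarith
  have h2d : 0 < 2 + d := by linarith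
  have ha : (0:ℝ) < 2 * m + δ₀ := by linarith
  set a : ℝ := 2 * (m:ℝ) + δ₀ with haa
  -- argument positivity
  have harg1 : ∀ j : ℕ, (0:ℝ) < (m:ℝ) + j + δ₀ := fun j => by
    have := Nat.cast_nonneg (α := ℝ) j; linarith
  have harg2 : ∀ j : ℕ, (0:ℝ) < (m:ℝ) + j + 2 + δ₀ + d := fun j => by
    have := Nat.cast_nonneg (α := ℝ) j; linarith
  have harg3 : ∀ j : ℕ, (0:ℝ) < (m:ℝ) + j + 1 + δ₀ := fun j => by
    have := Nat.cast_nonneg (α := ℝ) j; linarith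
  have harg4 : ∀ j : ℕ, (0:ℝ) < (m:ℝ) + j + 3 + δ₀ + d := fun j => by
    have := Nat.cast_nonneg (α := ℝ) j; linarith
  have hargm : (0:ℝ) < (m:ℝ) + 2 + δ₀ + d := by linarith
  -- the sequences
  set r : ℕ → ℝ := fun j => Real.Gamma ((m:ℝ) + j + δ₀) /
      Real.Gamma ((m:ℝ) + j + 2 + δ₀ + d) with hrdef
  set t : ℕ → ℝ := fun j => Real.Gamma ((m:ℝ) + j + 1 + δ₀) /
      Real.Gamma ((m:ℝ) + j + 2 + δ₀ + d) with htdef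
  have hrpos : ∀ j, 0 < r j := fun j =>
    div_pos (Real.Gamma_pos_of_pos (harg1 j)) (Real.Gamma_pos_of_pos (harg2 j))
  have htpos : ∀ j, 0 < t j := fun j =>
    div_pos (Real.Gamma_pos_of_pos (harg3 j)) (Real.Gamma_pos_of_pos (harg2 j))
  -- Gamma recurrences
  have hGr1 : ∀ j : ℕ, Real.Gamma ((m:ℝ) + j + 1 + δ₀)
      = ((m:ℝ) + j + δ₀) * Real.Gamma ((m:ℝ) + j + δ₀) := fun j => by
    rw [show (m:ℝ) + j + 1 + δ₀ = ((m:ℝ) + j + δ₀) + 1 by ring,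
      Real.Gamma_add_one (harg1 j).ne']
  have hGr2 : ∀ j : ℕ, Real.Gamma ((m:ℝ) + j + 3 + δ₀ + d)
      = ((m:ℝ) + j + 2 + δ₀ + d) * Real.Gamma ((m:ℝ) + j + 2 + δ₀ + d) := fun j => by
    rw [show (m:ℝ) + j + 3 + δ₀ + d = ((m:ℝ) + j + 2 + δ₀ + d) + 1 by ring,
      Real.Gamma_add_one (harg2 j).ne']
  have hGr3 : ∀ j : ℕ, Real.Gamma ((m:ℝ) + j + 2 + δ₀)
      = ((m:ℝ) + j + 1 + δ₀) * Real.Gamma ((m:ℝ) + j + 1 + δ₀) := fun j => by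
    rw [show (m:ℝ) + j + 2 + δ₀ = ((m:ℝ) + j + 1 + δ₀) + 1 by ring,
      Real.Gamma_add_one (harg3 j).ne']
  -- successor formulas
  have hr_succ : ∀ j : ℕ, r (j + 1)
      = ((m:ℝ) + j + δ₀) * Real.Gamma ((m:ℝ) + j + δ₀) /
        Real.Gamma ((m:ℝ) + j + 3 + δ₀ + d) := by
    intro j
    simp only [hrdef]
    push_cast
    rw [show (m:ℝ) + (j + 1) + δ₀ = (m:ℝ) + j + 1 + δ₀ by ring,
      show (m:ℝ) + (j + 1) + 2 + δ₀ + d = (m:ℝ) + j + 3 + δ₀ + d by ring,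
      hGr1 j]
  have ht_succ : ∀ j : ℕ, t (j + 1)
      = ((m:ℝ) + j + 1 + δ₀) * Real.Gamma ((m:ℝ) + j + 1 + δ₀) /
        Real.Gamma ((m:ℝ) + j + 3 + δ₀ + d) := by
    intro j
    simp only [htdef]
    push_cast
    rw [show (m:ℝ) + (j + 1) + 1 + δ₀ = (m:ℝ) + j + 2 + δ₀ by ring,
      show (m:ℝ) + (j + 1) + 2 + δ₀ + d = (m:ℝ) + j + 3 + δ₀ + d by ring,
      hGr3 j]
  -- difference formulas
  have hdiff_r : ∀ j : ℕ, r j - r (j + 1)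
      = (2 + d) * Real.Gamma ((m:ℝ) + j + δ₀) /
        Real.Gamma ((m:ℝ) + j + 3 + δ₀ + d) := by
    intro j
    rw [hr_succ j]
    simp only [hrdef]
    rw [hGr2 j]
    have h2 := (Real.Gamma_pos_of_pos (harg2 j)).ne'
    have h2' := (harg2 j).ne'
    field_simp
    ring
  have hdiff_t : ∀ j : ℕ, t j - t (j + 1)
      = (1 + d) * Real.Gamma ((m:ℝ) + j + 1 + δ₀) /
        Real.Gamma ((m:ℝ) + j + 3 + δ₀ + d) := by
    intro j
    rw [ht_succ j]
    simp only [htdef]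
    rw [hGr2 j]
    have h2 := (Real.Gamma_pos_of_pos (harg2 j)).ne'
    have h2' := (harg2 j).ne'
    field_simp
    ring
  -- telescoping hypotheses
  have heqr : ∀ j : ℕ, r j - r (j + 1) = (2 + d) * r (j + 1) / (j + ((m:ℝ) + δ₀)) := by
    intro j
    rw [hdiff_r j, hr_succ j]
    have h4 := (Real.Gamma_pos_of_pos (harg4 j)).ne'
    have h1 := (harg1 j).ne'
    rw [show (j:ℝ) + ((m:ℝ) + δ₀) = (m:ℝ) + j + δ₀ by ring]
    field_simp
  have heqt : ∀ j : ℕ, t j - t (j + 1) = (1 + d) * t (j + 1) / (j + ((m:ℝ) + 1 + δ₀)) := by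
    intro j
    rw [hdiff_t j, ht_succ j]
    have h4 := (Real.Gamma_pos_of_pos (harg4 j)).ne'
    have h3 := (harg3 j).ne'
    rw [show (j:ℝ) + ((m:ℝ) + 1 + δ₀) = (m:ℝ) + j + 1 + δ₀ by ring]
    field_simp
  -- the telescoping sums
  have hSr : HasSum (fun j => r j - r (j + 1)) (r 0) :=
    telescope_hasSum r (2 + d) ((m:ℝ) + δ₀) h2d hmδ hrpos heqr
  have hSt : HasSum (fun j => t j - t (j + 1)) (t 0) :=
    telescope_hasSum t (1 + d) ((m:ℝ) + 1 + δ₀) h1d (by linarith) htpos heqt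
  -- the constant B
  set B : ℝ := Real.Gamma ((m:ℝ) + 2 + δ₀ + d) / Real.Gamma ((m:ℝ) + δ₀) with hBdef
  have hGm := (Real.Gamma_pos_of_pos hmδ).ne'
  have hGM := (Real.Gamma_pos_of_pos hargm).ne'
  have hr0 : r 0 = Real.Gamma ((m:ℝ) + δ₀) / Real.Gamma ((m:ℝ) + 2 + δ₀ + d) := by
    simp only [hrdef]
    norm_num
  have ht0 : t 0 = Real.Gamma ((m:ℝ) + 1 + δ₀) / Real.Gamma ((m:ℝ) + 2 + δ₀ + d) := by
    simp only [htdef]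
    norm_num
  have hBr0 : B * r 0 = 1 := by
    rw [hr0, hBdef]
    field_simp
  have hG1 : Real.Gamma ((m:ℝ) + 1 + δ₀) = ((m:ℝ) + δ₀) * Real.Gamma ((m:ℝ) + δ₀) := by
    rw [show (m:ℝ) + 1 + δ₀ = ((m:ℝ) + δ₀) + 1 by ring, Real.Gamma_add_one hmδ.ne']
  have hBt0 : B * t 0 = (m:ℝ) + δ₀ := by
    rw [ht0, hBdef, hG1]
    field_simp
  -- p sums to 1
  have hpform : ∀ j : ℕ, pdeg m δ₀ (m + j) = B * (r j - r (j + 1)) := by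
    intro j
    have h4 := (Real.Gamma_pos_of_pos (harg4 j)).ne'
    rw [hdiff_r j, hBdef]
    unfold pdeg
    push_cast
    rw [hdd] at h4 ⊢
    set G1 := Real.Gamma ((m:ℝ) + ↑j + δ₀) with hG1'
    set G2 := Real.Gamma ((m:ℝ) + 2 + δ₀ + δ₀ / ↑m) with hG2'
    set G3 := Real.Gamma ((m:ℝ) + δ₀) with hG3'
    set G4 := Real.Gamma ((m:ℝ) + ↑j + 3 + δ₀ + δ₀ / ↑m) with hG4'
    field_simp
  have hsum_p : HasSum (fun j => pdeg m δ₀ (m + j)) 1 := by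
    have h := hSr.mul_left B
    rw [hBr0] at h
    have heqf : (fun j => pdeg m δ₀ (m + j)) = (fun j => B * (r j - r (j + 1))) :=
      funext hpform
    rw [heqf]
    exact h
  -- (k + δ) * p sums to a
  have hqform : ∀ j : ℕ, (((m + j : ℕ) : ℝ) + δ₀) * pdeg m δ₀ (m + j)
      = ((2 + d) * B / (1 + d)) * (t j - t (j + 1)) := by
    intro j
    have h4 := (Real.Gamma_pos_of_pos (harg4 j)).ne'
    have h1d' : (1:ℝ) + d ≠ 0 := h1d.ne'
    rw [hdiff_t j, hpform j, hdiff_r j, hGr1 j, hBdef]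
    push_cast
    rw [hdd] at h4 h1d' ⊢
    set G1 := Real.Gamma ((m:ℝ) + ↑j + δ₀) with hG1'
    set G2 := Real.Gamma ((m:ℝ) + 2 + δ₀ + δ₀ / ↑m) with hG2'
    set G3 := Real.Gamma ((m:ℝ) + δ₀) with hG3'
    set G4 := Real.Gamma ((m:ℝ) + ↑j + 3 + δ₀ + δ₀ / ↑m) with hG4'
    field_simp
  have hsum_q : HasSum (fun j => (((m + j : ℕ) : ℝ) + δ₀) * pdeg m δ₀ (m + j)) a := by
    have h := hSt.mul_left ((2 + d) * B / (1 + d))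
    have hval : (2 + d) * B / (1 + d) * t 0 = a := by
      rw [show (2 + d) * B / (1 + d) * t 0 = (2 + d) * (B * t 0) / (1 + d) by ring, hBt0,
        haa, hdd]
      have h1d' : (1:ℝ) + δ₀ / m ≠ 0 := by rw [← hdd]; exact h1d.ne'
      field_simp
    rw [hval] at h
    have heqf : (fun j => (((m + j : ℕ) : ℝ) + δ₀) * pdeg m δ₀ (m + j))
        = (fun j => ((2 + d) * B / (1 + d)) * (t j - t (j + 1))) := funext hqform
    rw [heqf]
    exact h
  -- positivity of p
  have hppos : ∀ j : ℕ, 0 < pdeg m δ₀ (m + j) := by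
    intro j
    rw [hpform j]
    exact mul_pos (div_pos (Real.Gamma_pos_of_pos hargm) (Real.Gamma_pos_of_pos hmδ))
      (by rw [hdiff_r j]
          exact div_pos (mul_pos h2d (Real.Gamma_pos_of_pos (harg1 j)))
            (Real.Gamma_pos_of_pos (harg4 j)))
  -- pointwise inequality and summability of f
  have hxpos : ∀ j : ℕ, (0:ℝ) < ((m + j : ℕ) : ℝ) + δ₀ := by
    intro j
    push_cast
    exact harg1 j
  have hf_sum : Summable (fun j => pdeg m δ₀ (m + j) / (((m + j : ℕ) : ℝ) + δ₀)) := by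
    apply Summable.of_nonneg_of_le (fun j => div_nonneg (hppos j).le (hxpos j).le)
      (g := fun j => pdeg m δ₀ (m + j) / (((m + j : ℕ) : ℝ) + δ₀))
      (f := fun j => (1 / ((m:ℝ) + δ₀)) * pdeg m δ₀ (m + j))
    · intro j
      rw [div_eq_mul_one_div, mul_comm]
      apply mul_le_mul_of_nonneg_right _ (hppos j).le
      apply one_div_le_one_div_of_le hmδ
      push_cast
      have := Nat.cast_nonneg (α := ℝ) j
      linarith
    · exact (hsum_p.summable).mul_left _
  have hg_hasSum : HasSum (fun j => (2 / a) * pdeg m δ₀ (m + j)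
      - (1 / a ^ 2) * ((((m + j : ℕ) : ℝ) + δ₀) * pdeg m δ₀ (m + j))) (1 / a) := by
    have h := (hsum_p.mul_left (2 / a)).sub (hsum_q.mul_left (1 / a ^ 2))
    have hval : 2 / a * 1 - 1 / a ^ 2 * a = 1 / a := by
      field_simp
      ring
    rwa [hval] at h
  have hle : ∀ j : ℕ, (2 / a) * pdeg m δ₀ (m + j)
      - (1 / a ^ 2) * ((((m + j : ℕ) : ℝ) + δ₀) * pdeg m δ₀ (m + j))
      ≤ pdeg m δ₀ (m + j) / (((m + j : ℕ) : ℝ) + δ₀) := by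
    intro j
    have h := aux_inv ha (hxpos j)
    have h2 := mul_le_mul_of_nonneg_right h (hppos j).le
    calc (2 / a) * pdeg m δ₀ (m + j)
        - (1 / a ^ 2) * ((((m + j : ℕ) : ℝ) + δ₀) * pdeg m δ₀ (m + j))
        = (2 / a - (((m + j : ℕ) : ℝ) + δ₀) / a ^ 2) * pdeg m δ₀ (m + j) := by ring
      _ ≤ (1 / (((m + j : ℕ) : ℝ) + δ₀)) * pdeg m δ₀ (m + j) := h2
      _ = pdeg m δ₀ (m + j) / (((m + j : ℕ) : ℝ) + δ₀) := by ring
  have hlt0 : (2 / a) * pdeg m δ₀ (m + 0)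
      - (1 / a ^ 2) * ((((m + 0 : ℕ) : ℝ) + δ₀) * pdeg m δ₀ (m + 0))
      < pdeg m δ₀ (m + 0) / (((m + 0 : ℕ) : ℝ) + δ₀) := by
    have hne : (((m + 0 : ℕ) : ℝ) + δ₀) ≠ a := by
      push_cast
      rw [haa]
      intro h
      have : (m:ℝ) = 0 := by linarith
      linarith
    have h := aux_inv_strict ha (hxpos 0) hne
    have h2 := mul_lt_mul_of_pos_right h (hppos 0)
    calc (2 / a) * pdeg m δ₀ (m + 0)
        - (1 / a ^ 2) * ((((m + 0 : ℕ) : ℝ) + δ₀) * pdeg m δ₀ (m + 0))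
        = (2 / a - (((m + 0 : ℕ) : ℝ) + δ₀) / a ^ 2) * pdeg m δ₀ (m + 0) := by ring
      _ < (1 / (((m + 0 : ℕ) : ℝ) + δ₀)) * pdeg m δ₀ (m + 0) := h2
      _ = pdeg m δ₀ (m + 0) / (((m + 0 : ℕ) : ℝ) + δ₀) := by ring
  have hS : 1 / a < ∑' j, pdeg m δ₀ (m + j) / (((m + j : ℕ) : ℝ) + δ₀) := by
    rw [← hg_hasSum.tsum_eq]
    exact Summable.tsum_lt_tsum hle hlt0 hg_hasSum.summable hf_sum
  -- finish
  have hterm : ∀ j : ℕ, (m : ℝ) * pdeg m δ₀ (m + j) / ((((m + j : ℕ) : ℝ) + δ₀) * (2 * m + δ₀))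
      = ((m:ℝ) / a) * (pdeg m δ₀ (m + j) / (((m + j : ℕ) : ℝ) + δ₀)) := by
    intro j
    rw [show (2 * (m:ℝ) + δ₀) = a from rfl]
    have hx := (hxpos j).ne'
    field_simp
  calc (0:ℝ) = ((m:ℝ) / a) * (1 / a) - m / a ^ 2 := by
        rw [show ((m:ℝ) / a) * (1 / a) = m / a ^ 2 by rw [div_mul_div_comm, mul_one, sq],
          sub_self]
      _ < ((m:ℝ) / a) * (∑' j, pdeg m δ₀ (m + j) / (((m + j : ℕ) : ℝ) + δ₀)) - m / a ^ 2 := by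
        have := mul_lt_mul_of_pos_left hS (by positivity : (0:ℝ) < (m:ℝ) / a)
        linarith
      _ = (∑' j : ℕ, (m : ℝ) * pdeg m δ₀ (m + j) /
            ((((m + j : ℕ) : ℝ) + δ₀) * (2 * m + δ₀))) - m / (2 * m + δ₀) ^ 2 := by
        rw [tsum_congr hterm, tsum_mul_left]
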